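/- Let F be the CDF of a probability measure on ℝ with F − F_{δ₀} ∈ L²(ℝ), and let ρ be a probability measure on ℝ whose support is contained in a bounded interval [−R, R]. Then the translated CDF G(x) = ∫_ℝ F(x − r) dρ(r) also satisfies G − F_{δ₀} ∈ L²(ℝ); i.e. the class Γ_F of CDFs at finite Cramér distance from the Dirac measure at 0 is invariant under reward translation with almost surely bounded rewards. -/

import Mathlib

open MeasureTheory Filter

/-- The CDF of the Dirac measure at `0`: the indicator of `[0, ∞)`. -/
noncomputable def diracCdf (x : ℝ) : ℝ := if 0 ≤ x then 1 else 0

lemma measurable_diracCdf : Measurable diracCdf := by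
  unfold diracCdf
  exact Measurable.ite measurableSet_Ici measurable_const measurable_const

lemma diracCdf_mem_Icc (x : ℝ) : diracCdf x ∈ Set.Icc (0:ℝ) 1 := by
  unfold diracCdf; split_ifs <;> norm_num

lemma diracCdf_translate_memL2 (c : ℝ) :
    MemLp (fun x => diracCdf (x + c) - diracCdf x) 2 (volume : Measure ℝ) := by
  have hind : MemLp ((Set.Icc (-|c|) |c|).indicator (fun _ => (1:ℝ))) 2
      (volume : Measure ℝ) :=
    memLp_indicator_const 2 measurableSet_Icc 1 (Or.inr (measure_Icc_lt_top).ne)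
  refine hind.mono ?_ ?_
  · exact ((measurable_diracCdf.comp (measurable_id.add_const c)).sub
      measurable_diracCdf).aestronglyMeasurable
  · refine Filter.Eventually.of_forall fun x => ?_
    by_cases hx : x ∈ Set.Icc (-|c|) |c|
    · have h1 := diracCdf_mem_Icc (x + c)
      have h2 := diracCdf_mem_Icc x
      simp only [Set.indicator_of_mem hx, Real.norm_eq_abs]
      rw [abs_one, abs_le]
      constructor <;> [linarith [h1.1, h2.2]; linarith [h1.2, h2.1]]
    · have hx' : x < -|c| ∨ |c| < x := by
        rcases lt_or_ge x (-|c|) with h | h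
        · exact Or.inl h
        · right
          by_contra h'
          exact hx ⟨h, le_of_not_gt h'⟩
      have : diracCdf (x + c) - diracCdf x = 0 := by
        rcases hx' with h | h
        · have hxc : x + c < 0 := by
            have := le_abs_self c; linarith
          have hx0 : x < 0 := by nlinarith [abs_nonneg c]
          simp [diracCdf, not_le.mpr hxc, not_le.mpr hx0]
        · have hxc : 0 ≤ x + c := by nlinarith [neg_abs_le c, abs_nonneg c]
          have hx0 : 0 ≤ x := le_trans (abs_nonneg c) h.le
          simp [diracCdf, hxc, hx0]
      rw [this]
      simp [Set.indicator]

/-- **Invariance of `Γ_F` under reward translation with bounded rewards.**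
Let `F` be the CDF of a probability measure `P` on `ℝ` with `F - F_{δ₀} ∈ L²(ℝ)`, and let `ρ`
be a probability measure supported in a bounded interval `[-R, R]`.  Then the translated CDF
`G(x) = ∫ F(x - r) dρ(r)` also satisfies `G - F_{δ₀} ∈ L²(ℝ)`. -/
theorem gammaF_invariant_reward_translation
    (P : Measure ℝ) [IsProbabilityMeasure P]
    (F : ℝ → ℝ) (hF : ∀ x, F x = (P (Set.Iic x)).toReal)
    (hL2 : MemLp (fun x => F x - diracCdf x) 2 (volume : Measure ℝ))
    (ρ : Measure ℝ) [IsProbabilityMeasure ρ]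
    (R : ℝ) (hρ : ρ (Set.Icc (-R) R)ᶜ = 0) :
    MemLp (fun x => (∫ r, F (x - r) ∂ρ) - diracCdf x) 2 (volume : Measure ℝ) := by
  -- basic properties of F
  have hFmono : Monotone F := by
    intro a b hab
    rw [hF a, hF b]
    exact ENNReal.toReal_le_toReal (measure_ne_top P _) (measure_ne_top P _)
      |>.mpr (measure_mono (Set.Iic_subset_Iic.mpr hab))
  have hF0 : ∀ x, 0 ≤ F x := fun x => by rw [hF x]; exact ENNReal.toReal_nonneg
  have hF1 : ∀ x, F x ≤ 1 := fun x => by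
    rw [hF x]
    exact ENNReal.toReal_le_of_le_ofReal zero_le_one (by simpa using prob_le_one)
  have hFmeas : Measurable F := hFmono.measurable
  -- a.e. support of ρ
  have ρae : ∀ᵐ r ∂ρ, r ∈ Set.Icc (-R) R := by
    exact mem_ae_iff.mpr hρ
  -- integrability of the translated family
  have hInt : ∀ x : ℝ, Integrable (fun r => F (x - r)) ρ := by
    intro x
    refine (integrable_const (1:ℝ)).mono' ?_ ?_
    · exact (hFmeas.comp (measurable_const.sub measurable_id)).aestronglyMeasurable
    · exact Filter.Eventually.of_forall fun r => by
        rw [Real.norm_eq_abs, abs_of_nonneg (hF0 _)]; exact hF1 _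
  -- sandwich bounds
  have hGle : ∀ x : ℝ, (∫ r, F (x - r) ∂ρ) ≤ F (x + R) := by
    intro x
    have : (∫ r, F (x - r) ∂ρ) ≤ ∫ _r, F (x + R) ∂ρ := by
      refine integral_mono_ae (hInt x) (integrable_const _) ?_
      filter_upwards [ρae] with r hr
      exact hFmono (by linarith [hr.1])
    simpa using this
  have hGge : ∀ x : ℝ, F (x + (-R)) ≤ ∫ r, F (x - r) ∂ρ := by
    intro x
    have : (∫ _r, F (x + (-R)) ∂ρ) ≤ ∫ r, F (x - r) ∂ρ := by
      refine integral_mono_ae (integrable_const _) (hInt x) ?_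
      filter_upwards [ρae] with r hr
      exact hFmono (by linarith [hr.2])
    simpa using this
  -- measurability of G
  have hGmono : Monotone (fun x => ∫ r, F (x - r) ∂ρ) := by
    intro a b hab
    exact integral_mono (hInt a) (hInt b) fun r => hFmono (by linarith)
  have hGmeas : AEStronglyMeasurable
      (fun x => (∫ r, F (x - r) ∂ρ) - diracCdf x) (volume : Measure ℝ) :=
    (hGmono.measurable.sub measurable_diracCdf).aestronglyMeasurable
  -- the dominating function
  have htrans : ∀ c : ℝ, MemLp (fun x => F (x + c) - diracCdf x) 2 (volume : Measure ℝ) := by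
    intro c
    have h1 : MemLp (fun x => F (x + c) - diracCdf (x + c)) 2 (volume : Measure ℝ) :=
      hL2.comp_measurePreserving (measurePreserving_add_right volume c)
    have h2 := diracCdf_translate_memL2 c
    have heq : (fun x => F (x + c) - diracCdf x)
        = (fun x => F (x + c) - diracCdf (x + c)) + (fun x => diracCdf (x + c) - diracCdf x) := by
      funext x; simp only [Pi.add_apply]; ring
    rw [heq]; exact h1.add h2
  have hg : MemLp (fun x => |F (x + R) - diracCdf x| + |F (x + (-R)) - diracCdf x|) 2
      (volume : Measure ℝ) := by
    have h := ((htrans R).norm).add ((htrans (-R)).norm)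
    have heq : (fun x => |F (x + R) - diracCdf x| + |F (x + (-R)) - diracCdf x|)
        = (fun x => ‖F (x + R) - diracCdf x‖) + (fun x => ‖F (x + (-R)) - diracCdf x‖) := by
      funext x; simp [Real.norm_eq_abs]
    rw [heq]; exact h
  refine hg.mono hGmeas ?_
  refine Filter.Eventually.of_forall fun x => ?_
  rw [Real.norm_eq_abs, Real.norm_eq_abs]
  have ha := hGle x
  have hb := hGge x
  have h1 : |(∫ r, F (x - r) ∂ρ) - diracCdf x|
      ≤ |F (x + R) - diracCdf x| + |F (x + (-R)) - diracCdf x| := by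
    rw [abs_le]
    constructor
    · have := neg_abs_le (F (x + (-R)) - diracCdf x)
      have h2 := abs_nonneg (F (x + R) - diracCdf x)
      linarith
    · have := le_abs_self (F (x + R) - diracCdf x)
      have h2 := abs_nonneg (F (x + (-R)) - diracCdf x)
      linarith
  calc |(∫ r, F (x - r) ∂ρ) - diracCdf x| ≤ _ := h1
    _ ≤ _ := le_abs_self _
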